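/- Let n ≥ 1 and let i be an integer with 2n/3 < i ≤ n (equivalently 3i > 2n). If f : Σ_3^n → ℝ is a nonzero function in the eigenspace U_i(n,3), then the cardinality of the support of f is at least 2^{2i−n} · 3^{n−i}, and this bound is sharp: there exists such a nonzero f whose support has cardinality exactly 2^{2i−n} · 3^{n−i}. -/

import Mathlib

set_option linter.unusedSectionVars false

/-- `f` belongs to the eigenspace `U_k(n,q)` of the Hamming graph `H(n,q)`,
i.e. `λ_k(n,q) · f(x) = Σ_{y ∈ N(x)} f(y)` for every vertex `x`, where
`λ_k(n,q) = n(q-1) - q·k` and `N(x)` is the set of vertices at Hamming distance 1 from `x`. -/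
def inU (n q k : ℕ) (f : (Fin n → Fin q) → ℝ) : Prop :=
  ∀ x : Fin n → Fin q,
    ((n : ℝ) * ((q : ℝ) - 1) - (q : ℝ) * (k : ℝ)) * f x =
      ∑ y ∈ Finset.univ.filter (fun y : Fin n → Fin q => hammingDist x y = 1), f y

/-- `f` belongs to the direct sum `U_{[i,j]}(n,q) = U_i(n,q) ⊕ … ⊕ U_j(n,q)`,
i.e. `f = Σ_{k=i}^{j} g_k` with `g_k ∈ U_k(n,q)`. -/
def inUIJ (n q i j : ℕ) (f : (Fin n → Fin q) → ℝ) : Prop :=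
  ∃ g : ℕ → (Fin n → Fin q) → ℝ,
    (∀ k ∈ Finset.Icc i j, inU n q k (g k)) ∧ f = ∑ k ∈ Finset.Icc i j, g k

/-- The cardinality of the support of `f`. -/
noncomputable def suppCard (n q : ℕ) (f : (Fin n → Fin q) → ℝ) : ℕ :=
  (Finset.univ.filter (fun x : Fin n → Fin q => f x ≠ 0)).card

open Finset

namespace S9

abbrev F3 := Fin 3

variable {ι : Type} [Fintype ι] [DecidableEq ι] {κ : Type} [Fintype κ] [DecidableEq κ]

noncomputable def suppc (f : (ι → F3) → ℝ) : ℕ := (univ.filter (fun x => f x ≠ 0)).card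

def nbrSum (f : (ι → F3) → ℝ) (x : ι → F3) : ℝ :=
  ∑ y ∈ univ.filter (fun y => hammingDist x y = 1), f y

def Eig (lam : ℝ) (f : (ι → F3) → ℝ) : Prop := ∀ x, lam * f x = nbrSum f x

lemma nbrSum_ite (f : (ι → F3) → ℝ) (x : ι → F3) :
    nbrSum f x = ∑ y : ι → F3, if hammingDist x y = 1 then f y else 0 := by
  rw [nbrSum, sum_filter]

lemma nbrSum_funsum {γ : Type} (s : Finset γ) (g : γ → (ι → F3) → ℝ) (x : ι → F3) :
    nbrSum (fun z => ∑ k ∈ s, g k z) x = ∑ k ∈ s, nbrSum (g k) x := by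
  unfold nbrSum; rw [Finset.sum_comm]

lemma nbrSum_smul (c : ℝ) (f : (ι → F3) → ℝ) (x : ι → F3) :
    nbrSum (fun z => c * f z) x = c * nbrSum f x := by
  unfold nbrSum; rw [Finset.mul_sum]

lemma nbrSum_sub (f g : (ι → F3) → ℝ) (x : ι → F3) :
    nbrSum (fun z => f z - g z) x = nbrSum f x - nbrSum g x := by
  unfold nbrSum; rw [Finset.sum_sub_distrib]

lemma Eig_zero (lam : ℝ) : Eig lam (fun _ : ι → F3 => (0:ℝ)) := by
  intro x; simp [nbrSum]

lemma Eig_smul {lam : ℝ} {f : (ι → F3) → ℝ} (c : ℝ) (hf : Eig lam f) :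
    Eig lam (fun z => c * f z) := by
  intro x; rw [nbrSum_smul]; rw [← hf x]; ring

lemma Eig_add {lam : ℝ} {f g : (ι → F3) → ℝ} (hf : Eig lam f) (hg : Eig lam g) :
    Eig lam (fun z => f z + g z) := by
  intro x
  have : nbrSum (fun z => f z + g z) x = nbrSum f x + nbrSum g x := by
    unfold nbrSum; rw [Finset.sum_add_distrib]
  rw [this, ← hf x, ← hg x]; ring

lemma dist_ite (x y : ι → F3) : hammingDist x y = ∑ i, if x i ≠ y i then 1 else 0 := by
  show (univ.filter _).card = _
  rw [card_filter]

/-- Hamming distance splits over a sum type. -/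
lemma dist_sum (x y : ι ⊕ κ → F3) :
    hammingDist x y =
      hammingDist (x ∘ Sum.inl) (y ∘ Sum.inl) + hammingDist (x ∘ Sum.inr) (y ∘ Sum.inr) := by
  rw [dist_ite, dist_ite, dist_ite, Fintype.sum_sum_type]
  rfl

lemma elim_comp (z : ι ⊕ κ → F3) : Sum.elim (z ∘ Sum.inl) (z ∘ Sum.inr) = z := by
  funext i; cases i <;> rfl

/-- Neighbour sum splits over a sum type. -/
lemma nbrSum_split (f : (ι ⊕ κ → F3) → ℝ) (z : ι ⊕ κ → F3) :
    nbrSum f z =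
      (∑ u ∈ univ.filter (fun u => hammingDist (z ∘ Sum.inl) u = 1), f (Sum.elim u (z ∘ Sum.inr)))
      + ∑ v ∈ univ.filter (fun v => hammingDist (z ∘ Sum.inr) v = 1),
          f (Sum.elim (z ∘ Sum.inl) v) := by
  rw [nbrSum_ite]
  rw [← Equiv.sum_comp (Equiv.sumArrowEquivProdArrow ι κ F3).symm
      (fun y => if hammingDist z y = 1 then f y else 0)]
  have hsymm : ∀ p : (ι → F3) × (κ → F3),
      (Equiv.sumArrowEquivProdArrow ι κ F3).symm p = Sum.elim p.1 p.2 := fun p => rfl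
  simp only [hsymm]
  rw [Fintype.sum_prod_type]
  have key : ∀ (u : ι → F3) (v : κ → F3),
      (if hammingDist z (Sum.elim u v) = 1 then f (Sum.elim u v) else 0) =
      (if hammingDist (z ∘ Sum.inl) u = 1 then (if v = z ∘ Sum.inr then f (Sum.elim u v) else 0) else 0)
      + (if hammingDist (z ∘ Sum.inr) v = 1 then (if u = z ∘ Sum.inl then f (Sum.elim u v) else 0) else 0) := by
    intro u v
    have hd : hammingDist z (Sum.elim u v) =
        hammingDist (z ∘ Sum.inl) u + hammingDist (z ∘ Sum.inr) v := by
      rw [dist_sum]; rfl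
    rw [hd]
    by_cases hu : u = z ∘ Sum.inl <;> by_cases hv : v = z ∘ Sum.inr
    · have h1 : hammingDist (z ∘ Sum.inl) u = 0 := by rw [hammingDist_eq_zero]; exact hu.symm
      have h2 : hammingDist (z ∘ Sum.inr) v = 0 := by rw [hammingDist_eq_zero]; exact hv.symm
      simp [h1, h2]
    · have h1 : hammingDist (z ∘ Sum.inl) u = 0 := by rw [hammingDist_eq_zero]; exact hu.symm
      simp [h1, hv, hu]
    · have h2 : hammingDist (z ∘ Sum.inr) v = 0 := by rw [hammingDist_eq_zero]; exact hv.symm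
      simp [h2, hu, hv]
    · have h1 : hammingDist (z ∘ Sum.inl) u ≠ 0 := by
        rw [Ne, hammingDist_eq_zero]; exact fun h => hu h.symm
      have h2 : hammingDist (z ∘ Sum.inr) v ≠ 0 := by
        rw [Ne, hammingDist_eq_zero]; exact fun h => hv h.symm
      have : ¬ (hammingDist (z ∘ Sum.inl) u + hammingDist (z ∘ Sum.inr) v = 1) := by omega
      simp [this, hu, hv]
  simp only [key, Finset.sum_add_distrib]
  congr 1
  · have : ∀ u : ι → F3, (∑ v : κ → F3, if hammingDist (z ∘ Sum.inl) u = 1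
        then (if v = z ∘ Sum.inr then f (Sum.elim u v) else 0) else 0)
        = if hammingDist (z ∘ Sum.inl) u = 1 then f (Sum.elim u (z ∘ Sum.inr)) else 0 := by
      intro u
      by_cases h : hammingDist (z ∘ Sum.inl) u = 1
      · simp only [h, if_true]; rw [Finset.sum_ite_eq' univ (z ∘ Sum.inr)]; simp
      · simp [h]
    simp only [this]; rw [sum_filter]
  · rw [Finset.sum_comm]
    have : ∀ v : κ → F3, (∑ u : ι → F3, if hammingDist (z ∘ Sum.inr) v = 1
        then (if u = z ∘ Sum.inl then f (Sum.elim u v) else 0) else 0)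
        = if hammingDist (z ∘ Sum.inr) v = 1 then f (Sum.elim (z ∘ Sum.inl) v) else 0 := by
      intro v
      by_cases h : hammingDist (z ∘ Sum.inr) v = 1
      · simp only [h, if_true]; rw [Finset.sum_ite_eq' univ (z ∘ Sum.inl)]; simp
      · simp [h]
    simp only [this]; rw [sum_filter]

/-! ### Transport along an index equivalence -/

def tr (e : ι ≃ κ) (f : (ι → F3) → ℝ) : (κ → F3) → ℝ := fun z => f (z ∘ e)

lemma dist_comp (e : ι ≃ κ) (z w : κ → F3) :
    hammingDist (z ∘ e) (w ∘ e) = hammingDist z w := by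
  rw [dist_ite, dist_ite]
  exact Fintype.sum_equiv e _ _ (fun i => rfl)

lemma tr_apply_symm (e : ι ≃ κ) (f : (ι → F3) → ℝ) (x : ι → F3) :
    tr e f (x ∘ e.symm) = f x := by
  unfold tr
  congr 1
  funext i
  simp

lemma tr_ne_zero (e : ι ≃ κ) {f : (ι → F3) → ℝ} (hf : f ≠ 0) : tr e f ≠ 0 := by
  intro h
  apply hf
  funext x
  have := congrFun h (x ∘ e.symm)
  rw [tr_apply_symm] at this
  simpa using this

lemma nbrSum_tr (e : ι ≃ κ) (f : (ι → F3) → ℝ) (z : κ → F3) :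
    nbrSum (tr e f) z = nbrSum f (z ∘ e) := by
  unfold nbrSum
  rw [sum_filter, sum_filter]
  rw [← Equiv.sum_comp (Equiv.arrowCongr e (Equiv.refl F3))
    (fun w => if hammingDist z w = 1 then tr e f w else 0)]
  apply Fintype.sum_congr
  intro y
  have hy : ∀ w : (ι → F3), (Equiv.arrowCongr e (Equiv.refl F3)) w ∘ e = w := by
    intro w; funext i; simp
  have h1 : hammingDist z ((Equiv.arrowCongr e (Equiv.refl F3)) y) = hammingDist (z ∘ e) y := by
    conv_rhs => rw [← hy y]
    rw [dist_comp]
  have h2 : tr e f ((Equiv.arrowCongr e (Equiv.refl F3)) y) = f y := by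
    show f (_ ∘ e) = f y
    rw [hy y]
  rw [h1, h2]

lemma Eig_tr (e : ι ≃ κ) {lam : ℝ} {f : (ι → F3) → ℝ} (hf : Eig lam f) : Eig lam (tr e f) := by
  intro z
  rw [nbrSum_tr]
  exact hf (z ∘ e)

lemma suppc_tr (e : ι ≃ κ) (f : (ι → F3) → ℝ) : suppc (tr e f) = suppc f := by
  unfold suppc
  apply Finset.card_bij (fun z _ => z ∘ e)
  · intro z hz
    simp only [mem_filter, mem_univ, true_and] at hz ⊢
    exact hz
  · intro z hz w hw h
    funext i
    have := congrFun h (e.symm i)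
    simpa using this
  · intro x hx
    refine ⟨x ∘ e.symm, ?_, ?_⟩
    · simp only [mem_filter, mem_univ, true_and] at hx ⊢
      show tr e f (x ∘ e.symm) ≠ 0
      rw [tr_apply_symm]; exact hx
    · funext i; simp

lemma tr_funsum {γ : Type} (e : ι ≃ κ) (s : Finset γ) (g : γ → (ι → F3) → ℝ) :
    tr e (∑ k ∈ s, g k) = ∑ k ∈ s, tr e (g k) := by
  funext z
  show (∑ k ∈ s, g k) (z ∘ e) = _
  rw [Finset.sum_apply, Finset.sum_apply]
  rfl

/-! ### Slices along a distinguished coordinate -/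

def sl (F : (ι ⊕ Fin 1 → F3) → ℝ) (a : F3) : (ι → F3) → ℝ :=
  fun u => F (Sum.elim u (fun _ => a))

lemma dist_fin1 (v w : Fin 1 → F3) : hammingDist v w = if v 0 = w 0 then 0 else 1 := by
  rw [dist_ite, Fin.sum_univ_one]
  by_cases h : v 0 = w 0 <;> simp [h]

lemma F_eq_sl (F : (ι ⊕ Fin 1 → F3) → ℝ) (z : ι ⊕ Fin 1 → F3) :
    F z = sl F (z (Sum.inr 0)) (z ∘ Sum.inl) := by
  unfold sl
  congr 1
  funext i
  cases i with
  | inl i => rfl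
  | inr i => simp [Subsingleton.elim i 0]

/-- key slice identity -/
lemma key_slice {lam : ℝ} {F : (ι ⊕ Fin 1 → F3) → ℝ} (hF : Eig lam F) (a : F3) (u : ι → F3) :
    lam * sl F a u = (∑ b ∈ univ.filter (fun b => b ≠ a), sl F b u) + nbrSum (sl F a) u := by
  have h := hF (Sum.elim u (fun _ => a))
  rw [nbrSum_split] at h
  have e1 : (Sum.elim u (fun _ : Fin 1 => a)) ∘ Sum.inl = u := rfl
  have e2 : (Sum.elim u (fun _ : Fin 1 => a)) ∘ Sum.inr = (fun _ : Fin 1 => a) := rfl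
  rw [e1, e2] at h
  rw [show lam * sl F a u = lam * F (Sum.elim u fun _ => a) from rfl, h]
  rw [add_comm]
  congr 1
  · -- κ-side sum equals sum over b ≠ a
    rw [sum_filter, sum_filter, ← Equiv.sum_comp (Equiv.funUnique (Fin 1) F3).symm
      (fun v => if hammingDist (fun _ : Fin 1 => a) v = 1 then F (Sum.elim u v) else 0)]
    apply Fintype.sum_congr
    intro b
    have hE : ((Equiv.funUnique (Fin 1) F3).symm b : Fin 1 → F3) = fun _ => b := rfl
    rw [hE]
    have hd : hammingDist (fun _ : Fin 1 => a) (fun _ : Fin 1 => b) = if a = b then 0 else 1 :=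
      dist_fin1 _ _
    rw [hd]
    by_cases h : a = b
    · rw [if_pos h, if_neg (by norm_num : ¬ (0:ℕ) = 1),
        if_neg (by simp [h.symm] : ¬ b ≠ a)]
    · rw [if_neg h, if_pos rfl, if_pos (show b ≠ a from fun hc => h hc.symm)]
      rfl

/-- сумма срезов -/
lemma Eig_sliceSum {lam : ℝ} {F : (ι ⊕ Fin 1 → F3) → ℝ} (hF : Eig lam F) :
    Eig (lam - 2) (fun u => ∑ b : F3, sl F b u) := by
  intro u
  rw [nbrSum_funsum]
  have h := fun a => key_slice hF a u
  have hfilter : ∀ a : F3, (∑ b ∈ univ.filter (fun b => b ≠ a), sl F b u)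
      = (∑ b : F3, sl F b u) - sl F a u := by
    intro a
    rw [Finset.filter_ne', Finset.sum_erase_eq_sub (mem_univ a)]
  have h3 : ∑ a : F3, lam * sl F a u
      = ∑ a : F3, (((∑ b : F3, sl F b u) - sl F a u) + nbrSum (sl F a) u) := by
    apply Fintype.sum_congr
    intro a
    rw [h a, hfilter a]
  rw [Finset.sum_add_distrib, Finset.sum_sub_distrib] at h3
  rw [← Finset.mul_sum] at h3
  simp only [Finset.sum_const, Finset.card_univ] at h3
  have hcard : (Fintype.card F3 : ℕ) = 3 := rfl
  rw [hcard] at h3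
  show (lam - 2) * (∑ b : F3, sl F b u) = ∑ a : F3, nbrSum (sl F a) u
  have hsm : (3 : ℕ) • (∑ b : F3, sl F b u) = 3 * (∑ b : F3, sl F b u) := by
    rw [nsmul_eq_mul]; norm_num
  rw [hsm] at h3
  linarith [h3]

/-- разность срезов -/
lemma Eig_sliceDiff {lam : ℝ} {F : (ι ⊕ Fin 1 → F3) → ℝ} (hF : Eig lam F) (a b : F3) :
    Eig (lam + 1) (fun u => sl F a u - sl F b u) := by
  intro u
  rw [nbrSum_sub]
  have ha := key_slice hF a u
  have hb := key_slice hF b u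
  have hfilter : ∀ c : F3, (∑ d ∈ univ.filter (fun d => d ≠ c), sl F d u)
      = (∑ d : F3, sl F d u) - sl F c u := by
    intro c
    rw [Finset.filter_ne', Finset.sum_erase_eq_sub (mem_univ c)]
  rw [hfilter] at ha hb
  show (lam + 1) * (sl F a u - sl F b u) = nbrSum (sl F a) u - nbrSum (sl F b) u
  linarith [ha, hb]



lemma Eig_sub {lam : ℝ} {f g : (ι → F3) → ℝ} (hf : Eig lam f) (hg : Eig lam g) :
    Eig lam (fun z => f z - g z) := by
  intro x
  rw [nbrSum_sub, ← hf x, ← hg x]; ring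

lemma Eig_funsum {γ : Type} {lam : ℝ} {s : Finset γ} {h : γ → (ι → F3) → ℝ}
    (hh : ∀ b ∈ s, Eig lam (h b)) : Eig lam (fun w => ∑ b ∈ s, h b w) := by
  intro x
  rw [nbrSum_funsum, Finset.mul_sum]
  exact Finset.sum_congr rfl (fun b hb => hh b hb x)

/-! ### Transport from `Fin (n+1)` -/

def trS {n : ℕ} (f : (Fin (n+1) → F3) → ℝ) : (Fin n ⊕ Fin 1 → F3) → ℝ :=
  tr finSumFinEquiv.symm f

lemma trS_Eig {n : ℕ} {lam : ℝ} {f : (Fin (n+1) → F3) → ℝ} (hf : Eig lam f) :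
    Eig lam (trS f) := Eig_tr _ hf

lemma trS_ne_zero {n : ℕ} {f : (Fin (n+1) → F3) → ℝ} (hf : f ≠ 0) : trS f ≠ 0 :=
  tr_ne_zero _ hf

lemma trS_suppc {n : ℕ} (f : (Fin (n+1) → F3) → ℝ) : suppc (trS f) = suppc f :=
  suppc_tr _ f

lemma zero_of_slices {n : ℕ} {f : (Fin (n+1) → F3) → ℝ}
    (h : ∀ a, ∀ w, sl (trS f) a w = 0) : ∀ x, f x = 0 := by
  intro x
  have h1 : trS f (x ∘ finSumFinEquiv.symm.symm) = f x := tr_apply_symm _ f x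
  rw [← h1, F_eq_sl (trS f) (x ∘ finSumFinEquiv.symm.symm)]
  exact h _ _

lemma sum3 (t : F3 → ℝ) (c : ℝ) (h : ∀ b, t b = c) : ∑ b : F3, t b = 3 * c := by
  rw [Fintype.sum_congr t (fun _ => c) h, Finset.sum_const, Finset.card_univ]
  have hcard : (Fintype.card F3 : ℕ) = 3 := rfl
  rw [hcard, nsmul_eq_mul]
  norm_num

/-! ### Functions with eigenvalue out of range vanish -/

lemma eig_extreme : ∀ (n : ℕ) (lam : ℝ) (f : (Fin n → F3) → ℝ),
    Eig lam f → (lam < -(n:ℝ) ∨ 2*(n:ℝ) < lam) → ∀ x, f x = 0 := by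
  intro n
  induction n with
  | zero =>
    intro lam f hf hl x
    have h := hf x
    have hempty : (univ.filter (fun y : Fin 0 → F3 => hammingDist x y = 1)) = ∅ := by
      apply Finset.filter_false_of_mem
      intro y _
      have : hammingDist x y = 0 := by rw [dist_ite]; simp
      omega
    rw [nbrSum, hempty, Finset.sum_empty] at h
    have hlam : lam ≠ 0 := by
      rcases hl with h1 | h1 <;> [skip; skip] <;> simp at h1 <;> nlinarith
    exact (mul_eq_zero.mp h).resolve_left hlam
  | succ n IH =>
    intro lam f hf hl
    have hF : Eig lam (trS f) := trS_Eig hf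
    have hdiff : ∀ a b : F3, ∀ w, sl (trS f) a w - sl (trS f) b w = 0 := by
      intro a b
      apply IH (lam + 1) _ (Eig_sliceDiff hF a b)
      rcases hl with h1 | h1
      · left; push_cast at h1 ⊢; linarith
      · right; push_cast at h1 ⊢; linarith
    have hsum : ∀ w, (∑ b : F3, sl (trS f) b w) = 0 := by
      apply IH (lam - 2) _ (Eig_sliceSum hF)
      rcases hl with h1 | h1
      · left; push_cast at h1 ⊢; linarith
      · right; push_cast at h1 ⊢; linarith
    have hslice : ∀ a, ∀ w, sl (trS f) a w = 0 := by
      intro a w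
      have h3 : (∑ b : F3, sl (trS f) b w) = 3 * sl (trS f) a w :=
        sum3 _ _ (fun b => by have := hdiff b a w; linarith)
      have := hsum w
      rw [h3] at this
      linarith
    exact zero_of_slices hslice

/-! ### Top eigenvalue: constants -/

lemma eig_top : ∀ (n : ℕ) (f : (Fin n → F3) → ℝ), Eig (2*(n:ℝ)) f → ∃ c, ∀ x, f x = c := by
  intro n
  induction n with
  | zero =>
    intro f _
    refine ⟨f default, fun x => ?_⟩
    congr 1
    exact Subsingleton.elim x default
  | succ n IH =>
    intro f hf
    have hF : Eig (2*((n:ℝ)+1)) (trS f) := by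
      have h := trS_Eig hf
      have e : (2*(((n+1):ℕ):ℝ)) = 2*((n:ℝ)+1) := by push_cast; ring
      rw [e] at h; exact h
    have hdiff : ∀ a b : F3, ∀ w, sl (trS f) a w - sl (trS f) b w = 0 := by
      intro a b
      apply eig_extreme n (2*((n:ℝ)+1) + 1) _ (Eig_sliceDiff hF a b)
      right; push_cast; linarith
    have hsum : Eig (2*(n:ℝ)) (fun w => ∑ b : F3, sl (trS f) b w) := by
      have h := Eig_sliceSum hF
      have e : (2*((n:ℝ)+1) - 2) = 2*(n:ℝ) := by ring
      rw [e] at h; exact h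
    obtain ⟨c, hc⟩ := IH _ hsum
    refine ⟨c/3, fun x => ?_⟩
    have h1 : trS f (x ∘ finSumFinEquiv.symm.symm) = f x := tr_apply_symm _ f x
    rw [← h1, F_eq_sl (trS f) (x ∘ finSumFinEquiv.symm.symm)]
    set a := (x ∘ finSumFinEquiv.symm.symm) (Sum.inr 0)
    set w := (x ∘ finSumFinEquiv.symm.symm) ∘ Sum.inl
    have h3 : (∑ b : F3, sl (trS f) b w) = 3 * sl (trS f) a w :=
      sum3 _ _ (fun b => by have := hdiff b a w; linarith)
    have := hc w
    rw [h3] at this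
    linarith

/-! ### suppc decomposes over slices -/

lemma suppc_slices (F : (ι ⊕ Fin 1 → F3) → ℝ) : suppc F = ∑ a : F3, suppc (sl F a) := by
  unfold suppc
  rw [card_filter]
  rw [← Equiv.sum_comp (Equiv.sumArrowEquivProdArrow ι (Fin 1) F3).symm
      (fun z => if F z ≠ 0 then 1 else 0)]
  have hsymm : ∀ p : (ι → F3) × (Fin 1 → F3),
      (Equiv.sumArrowEquivProdArrow ι (Fin 1) F3).symm p = Sum.elim p.1 p.2 := fun p => rfl
  simp only [hsymm]
  rw [Fintype.sum_prod_type]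
  rw [Finset.sum_comm]
  rw [← Equiv.sum_comp (Equiv.funUnique (Fin 1) F3).symm
      (fun v => ∑ u : ι → F3, if F (Sum.elim u v) ≠ 0 then 1 else 0)]
  apply Fintype.sum_congr
  intro a
  rw [card_filter]
  apply Fintype.sum_congr
  intro u
  rfl

/-! ### Mix : membership in a sum of eigenspaces -/

def lamE (n k : ℕ) : ℝ := 2*(n:ℝ) - 3*(k:ℝ)

def Mix (n i j : ℕ) (f : (Fin n → F3) → ℝ) : Prop :=
  ∃ g : ℕ → (Fin n → F3) → ℝ,
    (∀ k ∈ Finset.Icc i j, Eig (lamE n k) (g k)) ∧ f = ∑ k ∈ Finset.Icc i j, g k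

lemma Mix_zero (n i j : ℕ) : Mix n i j (fun _ => 0) := by
  refine ⟨fun _ => fun _ => 0, fun k _ => Eig_zero _, ?_⟩
  funext x
  rw [Finset.sum_apply]
  simp

lemma Mix_of_eq {n i j : ℕ} {f g : (Fin n → F3) → ℝ} (h : Mix n i j f) (hfg : f = g) :
    Mix n i j g := hfg ▸ h

lemma Mix_single {n i j k : ℕ} {u : (Fin n → F3) → ℝ} (hik : i ≤ k) (hkj : k ≤ j)
    (hu : Eig (lamE n k) u) : Mix n i j u := by
  refine ⟨fun l => if l = k then u else fun _ => 0, ?_, ?_⟩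
  · intro l _
    show Eig (lamE n l) (if l = k then u else fun _ => 0)
    by_cases h : l = k
    · rw [if_pos h, h]; exact hu
    · rw [if_neg h]; exact Eig_zero _
  · funext x
    rw [Finset.sum_apply]
    have : ∀ l, (if l = k then u else fun _ => (0:ℝ)) x = if l = k then u x else 0 := by
      intro l; by_cases h : l = k <;> simp [h]
    simp only [this]
    rw [Finset.sum_ite_eq' (Finset.Icc i j) k (fun _ => u x)]
    rw [if_pos (Finset.mem_Icc.mpr ⟨hik, hkj⟩)]

lemma Mix_add {n i j : ℕ} {f g : (Fin n → F3) → ℝ} (hf : Mix n i j f) (hg : Mix n i j g) :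
    Mix n i j (fun x => f x + g x) := by
  obtain ⟨p, hp, hps⟩ := hf
  obtain ⟨q, hq, hqs⟩ := hg
  refine ⟨fun k => fun x => p k x + q k x, fun k hk => Eig_add (hp k hk) (hq k hk), ?_⟩
  funext x
  rw [Finset.sum_apply]
  have h1 : f x = ∑ k ∈ Finset.Icc i j, p k x := by rw [hps, Finset.sum_apply]
  have h2 : g x = ∑ k ∈ Finset.Icc i j, q k x := by rw [hqs, Finset.sum_apply]
  rw [h1, h2, ← Finset.sum_add_distrib]

lemma Mix_smul {n i j : ℕ} {f : (Fin n → F3) → ℝ} (c : ℝ) (hf : Mix n i j f) :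
    Mix n i j (fun x => c * f x) := by
  obtain ⟨p, hp, hps⟩ := hf
  refine ⟨fun k => fun x => c * p k x, fun k hk => Eig_smul c (hp k hk), ?_⟩
  funext x
  rw [Finset.sum_apply]
  have h1 : f x = ∑ k ∈ Finset.Icc i j, p k x := by rw [hps, Finset.sum_apply]
  rw [h1, Finset.mul_sum]

lemma Mix_funsum {γ : Type} {n i j : ℕ} {s : Finset γ} {w : γ → (Fin n → F3) → ℝ}
    (hw : ∀ b ∈ s, Mix n i j (w b)) : Mix n i j (fun x => ∑ b ∈ s, w b x) := by
  classical
  induction s using Finset.induction_on with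
  | empty => exact Mix_of_eq (Mix_zero n i j) (by funext x; simp)
  | @insert a s ha IH =>
    have h1 : Mix n i j (fun x => w a x + ∑ b ∈ s, w b x) :=
      Mix_add (hw a (Finset.mem_insert_self a s))
        (IH (fun b hb => hw b (Finset.mem_insert_of_mem hb)))
    apply Mix_of_eq h1
    funext x
    rw [Finset.sum_insert ha]

lemma Mix_mono {n i j i' j' : ℕ} {f : (Fin n → F3) → ℝ} (hf : Mix n i j f)
    (hi : i' ≤ i) (hj : j ≤ j') : Mix n i' j' f := by
  obtain ⟨p, hp, hps⟩ := hf
  have hsub : Finset.Icc i j ⊆ Finset.Icc i' j' := Finset.Icc_subset_Icc hi hj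
  refine ⟨fun k => if k ∈ Finset.Icc i j then p k else fun _ => 0, ?_, ?_⟩
  · intro k _
    show Eig (lamE n k) (if k ∈ Finset.Icc i j then p k else fun _ => 0)
    by_cases h : k ∈ Finset.Icc i j
    · rw [if_pos h]; exact hp k h
    · rw [if_neg h]; exact Eig_zero _
  · funext x
    rw [Finset.sum_apply]
    have : ∀ k, (if k ∈ Finset.Icc i j then p k else fun _ => (0:ℝ)) x
        = if k ∈ Finset.Icc i j then p k x else 0 := by
      intro k; by_cases h : k ∈ Finset.Icc i j <;> simp [h]
    simp only [this]
    rw [Finset.sum_ite_mem, Finset.inter_eq_right.mpr hsub, hps, Finset.sum_apply]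

lemma Mix_empty {n i j : ℕ} {f : (Fin n → F3) → ℝ} (hf : Mix n i j f) (hij : j < i) :
    ∀ x, f x = 0 := by
  obtain ⟨p, _, hps⟩ := hf
  intro x
  rw [hps, Finset.sum_apply, Finset.Icc_eq_empty (by omega), Finset.sum_empty]

/-! ### Independence of eigenfunctions -/

lemma lamE_inj {n k l : ℕ} (h : lamE n k = lamE n l) : k = l := by
  unfold lamE at h
  have : (k:ℝ) = l := by linarith
  exact_mod_cast this

lemma eig_indep (n : ℕ) (s : Finset ℕ) (w : ℕ → (Fin n → F3) → ℝ)
    (hw : ∀ k ∈ s, Eig (lamE n k) (w k)) (h0 : ∀ x, ∑ k ∈ s, w k x = 0) :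
    ∀ k ∈ s, ∀ x, w k x = 0 := by
  classical
  induction s using Finset.induction_on generalizing w with
  | empty => intro k hk; exact absurd hk (Finset.notMem_empty k)
  | @insert a s ha IH =>
    intro k hk x
    -- the neighbour-sum of the total is zero
    have htotal : ∀ y, nbrSum (fun z => ∑ l ∈ insert a s, w l z) y = 0 := by
      intro y
      have : (fun z => ∑ l ∈ insert a s, w l z) = fun _ => (0:ℝ) := by
        funext z; exact h0 z
      rw [this]
      simp [nbrSum]
    have hA : ∀ y, ∑ l ∈ insert a s, lamE n l * w l y = 0 := by
      intro y
      have h1 : ∑ l ∈ insert a s, lamE n l * w l y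
          = ∑ l ∈ insert a s, nbrSum (w l) y :=
        Finset.sum_congr rfl (fun l hl => hw l hl y)
      rw [h1, ← nbrSum_funsum, htotal y]
    have hB : ∀ y, ∑ l ∈ insert a s, lamE n a * w l y = 0 := by
      intro y
      rw [← Finset.mul_sum, h0 y, mul_zero]
    have hsub : ∀ y, ∑ l ∈ s, (lamE n l - lamE n a) * w l y = 0 := by
      intro y
      have h2 := hA y
      have h3 := hB y
      rw [Finset.sum_insert ha] at h2 h3
      have h4 : ∑ l ∈ s, (lamE n l - lamE n a) * w l y
          = (∑ l ∈ s, lamE n l * w l y) - ∑ l ∈ s, lamE n a * w l y := by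
        rw [← Finset.sum_sub_distrib]
        exact Finset.sum_congr rfl (fun l _ => by ring)
      rw [h4]
      linarith
    have hIH := IH (w := fun l => fun y => (lamE n l - lamE n a) * w l y)
      (fun l hl => Eig_smul _ (hw l (Finset.mem_insert_of_mem hl))) hsub
    have hzero : ∀ l ∈ s, ∀ y, w l y = 0 := by
      intro l hl y
      have h5 := hIH l hl y
      have h6 : lamE n l - lamE n a ≠ 0 := by
        intro hc
        have : lamE n l = lamE n a := by linarith
        exact ha ((lamE_inj this) ▸ hl)
      rcases mul_eq_zero.mp h5 with h | h
      · exact absurd h h6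
      · exact h
    rcases Finset.mem_insert.mp hk with rfl | hks
    · have h7 := h0 x
      rw [Finset.sum_insert ha] at h7
      have h8 : ∑ l ∈ s, w l x = 0 :=
        Finset.sum_eq_zero (fun l hl => hzero l hl x)
      linarith
    · exact hzero k hks x

/-! ### Intersection of two Mix intervals -/

lemma Mix_inter {n i j a b : ℕ} {f : (Fin n → F3) → ℝ}
    (h1 : Mix n i j f) (h2 : Mix n a b f) : Mix n (max i a) (min j b) f := by
  classical
  obtain ⟨p, hp, hps⟩ := h1
  obtain ⟨q, hq, hqs⟩ := h2
  set s := Finset.Icc (min i a) (max j b) with hs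
  have hsub1 : Finset.Icc i j ⊆ s := Finset.Icc_subset_Icc (min_le_left _ _) (le_max_left _ _)
  have hsub2 : Finset.Icc a b ⊆ s := Finset.Icc_subset_Icc (min_le_right _ _) (le_max_right _ _)
  set r : ℕ → (Fin n → F3) → ℝ := fun k => fun x =>
    (if k ∈ Finset.Icc i j then p k x else 0) - (if k ∈ Finset.Icc a b then q k x else 0)
    with hr
  have hrE : ∀ k ∈ s, Eig (lamE n k) (r k) := by
    intro k _
    apply Eig_sub
    · by_cases h : k ∈ Finset.Icc i j
      · simp only [hr, h, if_true]; exact hp k h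
      · simp only [hr, h, if_false]; exact Eig_zero _
    · by_cases h : k ∈ Finset.Icc a b
      · simp only [h, if_true]; exact hq k h
      · simp only [h, if_false]; exact Eig_zero _
  have hr0 : ∀ x, ∑ k ∈ s, r k x = 0 := by
    intro x
    have e1 : ∑ k ∈ s, (if k ∈ Finset.Icc i j then p k x else 0) = f x := by
      rw [Finset.sum_ite_mem, Finset.inter_eq_right.mpr hsub1, hps, Finset.sum_apply]
    have e2 : ∑ k ∈ s, (if k ∈ Finset.Icc a b then q k x else 0) = f x := by
      rw [Finset.sum_ite_mem, Finset.inter_eq_right.mpr hsub2, hqs, Finset.sum_apply]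
    rw [hr]
    simp only []
    rw [Finset.sum_sub_distrib, e1, e2, sub_self]
  have hind := eig_indep n s r hrE hr0
  refine ⟨p, ?_, ?_⟩
  · intro k hk
    rw [Finset.mem_Icc] at hk
    exact hp k (Finset.mem_Icc.mpr ⟨le_trans (le_max_left _ _) hk.1,
      le_trans hk.2 (min_le_left _ _)⟩)
  · funext x
    rw [Finset.sum_apply]
    have h3 : f x = ∑ k ∈ Finset.Icc i j, p k x := by rw [hps, Finset.sum_apply]
    rw [h3]
    symm
    apply Finset.sum_subset
    · exact Finset.Icc_subset_Icc (le_max_left _ _) (min_le_left _ _)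
    · intro k hk1 hk2
      rw [Finset.mem_Icc] at hk1 hk2
      have hknab : k ∉ Finset.Icc a b := by
        rw [Finset.mem_Icc]
        intro hab
        exact hk2 ⟨max_le hk1.1 hab.1, le_min hk1.2 hab.2⟩
      have h5 := hind k (hsub1 (Finset.mem_Icc.mpr hk1)) x
      rw [hr] at h5
      simp only [Finset.mem_Icc.mpr hk1, if_true, hknab, if_false, sub_zero] at h5
      exact h5


/-! ### Slice decomposition of pure eigenfunctions -/

lemma lamE_succ_sub2 (n k : ℕ) : lamE (n+1) k - 2 = lamE n k := by
  unfold lamE; push_cast; ring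

lemma lamE_succ_add1 (n k : ℕ) : lamE (n+1) (k+1) + 1 = lamE n k := by
  unfold lamE; push_cast; ring

lemma pure_gsum {n k : ℕ} {u : (Fin (n+1) → F3) → ℝ} (hu : Eig (lamE (n+1) k) u) :
    Mix n k (min k n) (fun w => ∑ b : F3, sl (trS u) b w) := by
  have hG : Eig (lamE n k) (fun w => ∑ b : F3, sl (trS u) b w) := by
    have h := Eig_sliceSum (trS_Eig hu)
    rw [lamE_succ_sub2] at h
    exact h
  by_cases hk : k ≤ n
  · rw [min_eq_left hk]
    exact Mix_single le_rfl le_rfl hG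
  · push_neg at hk
    have hzero := eig_extreme n (lamE n k) _ hG (by
      left
      unfold lamE
      have : (n:ℝ) + 1 ≤ (k:ℝ) := by exact_mod_cast hk
      linarith)
    rw [min_eq_right (by omega : n ≤ k)]
    refine ⟨fun _ => fun _ => 0, fun l _ => Eig_zero _, ?_⟩
    funext w
    rw [Finset.sum_apply, Finset.Icc_eq_empty (by omega), Finset.sum_empty]
    exact hzero w

lemma pure_diff {n k : ℕ} {u : (Fin (n+1) → F3) → ℝ} (hu : Eig (lamE (n+1) k) u) (a b : F3) :
    Mix n (k-1) (k-1) (fun w => sl (trS u) a w - sl (trS u) b w) := by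
  cases k with
  | zero =>
    have hzero := eig_extreme n (lamE (n+1) 0 + 1) _ (Eig_sliceDiff (trS_Eig hu) a b) (by
      right
      unfold lamE
      push_cast
      linarith)
    exact Mix_of_eq (Mix_zero n 0 0) (by funext w; exact (hzero w).symm)
  | succ k' =>
    have h := Eig_sliceDiff (trS_Eig hu) a b
    rw [lamE_succ_add1] at h
    exact Mix_single le_rfl le_rfl h

lemma pure_slice {n k : ℕ} {u : (Fin (n+1) → F3) → ℝ} (hk : k ≤ n+1)
    (hu : Eig (lamE (n+1) k) u) (a : F3) :
    Mix n (k-1) (min k n) (sl (trS u) a) := by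
  have part1 : Mix n (k-1) (min k n)
      (fun x => (1/3 : ℝ) * ((fun w => ∑ b : F3, sl (trS u) b w) x)) :=
    Mix_mono (Mix_smul (1/3) (pure_gsum hu)) (Nat.sub_le k 1) le_rfl
  have part2 : Mix n (k-1) (min k n)
      (fun x => (1/3 : ℝ) * ((fun w => ∑ b : F3, (sl (trS u) a w - sl (trS u) b w)) x)) := by
    cases k with
    | zero =>
      have hzero := eig_extreme n (lamE (n+1) 0 + 1) _
        (Eig_funsum (s := univ) (fun b _ => Eig_sliceDiff (trS_Eig hu) a b)) (by
          right; unfold lamE; push_cast; linarith)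
      apply Mix_of_eq (Mix_zero n 0 (min 0 n))
      funext w
      show (0:ℝ) = 1/3 * (∑ b : F3, (sl (trS u) a w - sl (trS u) b w))
      rw [hzero w]
      ring
    | succ k' =>
      have h : Eig (lamE n k') (fun w => ∑ b : F3, (sl (trS u) a w - sl (trS u) b w)) := by
        have h0 := Eig_funsum (fun b (_ : b ∈ univ) => Eig_sliceDiff (trS_Eig hu) a b)
        rw [lamE_succ_add1] at h0
        exact h0
      refine Mix_mono (Mix_smul (1/3) (Mix_single le_rfl le_rfl h)) le_rfl ?_
      have : k' + 1 ≤ n + 1 := hk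
      omega
  apply Mix_of_eq (Mix_add part1 part2)
  funext w
  show (1/3 : ℝ) * (∑ b : F3, sl (trS u) b w)
      + (1/3 : ℝ) * (∑ b : F3, (sl (trS u) a w - sl (trS u) b w)) = sl (trS u) a w
  have h1 : ∑ b : F3, (sl (trS u) a w - sl (trS u) b w)
      = 3 * sl (trS u) a w - ∑ b : F3, sl (trS u) b w := by
    rw [Finset.sum_sub_distrib]
    have h2 : ∑ _b : F3, sl (trS u) a w = 3 * sl (trS u) a w := sum3 _ _ (fun _ => rfl)
    rw [h2]
  rw [h1]
  ring

/-! ### Slice lemmas for Mix functions -/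

lemma sl_trS_sum {n i j : ℕ} {f : (Fin (n+1) → F3) → ℝ} {u : ℕ → (Fin (n+1) → F3) → ℝ}
    (hus : f = ∑ k ∈ Finset.Icc i j, u k) (a : F3) (w : Fin n → F3) :
    sl (trS f) a w = ∑ k ∈ Finset.Icc i j, sl (trS (u k)) a w := by
  show f _ = _
  rw [hus, Finset.sum_apply]
  rfl

lemma mix_slice {n i j : ℕ} {f : (Fin (n+1) → F3) → ℝ} (hf : Mix (n+1) i j f)
    (hj : j ≤ n+1) (a : F3) : Mix n (i-1) (min j n) (sl (trS f) a) := by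
  obtain ⟨u, hu, hus⟩ := hf
  have heq : sl (trS f) a = fun w => ∑ k ∈ Finset.Icc i j, sl (trS (u k)) a w := by
    funext w; exact sl_trS_sum hus a w
  rw [heq]
  apply Mix_funsum
  intro k hk
  have hk' := Finset.mem_Icc.mp hk
  exact Mix_mono (pure_slice (le_trans hk'.2 hj) (hu k hk) a) (by omega) (by omega)

lemma mix_diff {n i j : ℕ} {f : (Fin (n+1) → F3) → ℝ} (hf : Mix (n+1) i j f) (a b : F3) :
    Mix n (i-1) (j-1) (fun w => sl (trS f) a w - sl (trS f) b w) := by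
  obtain ⟨u, hu, hus⟩ := hf
  have heq : (fun w => sl (trS f) a w - sl (trS f) b w)
      = fun w => ∑ k ∈ Finset.Icc i j, (sl (trS (u k)) a w - sl (trS (u k)) b w) := by
    funext w
    rw [Finset.sum_sub_distrib, ← sl_trS_sum hus a w, ← sl_trS_sum hus b w]
  rw [heq]
  apply Mix_funsum
  intro k hk
  have hk' := Finset.mem_Icc.mp hk
  exact Mix_mono (pure_diff (hu k hk) a b) (by omega) (by omega)

lemma mix_gsum {n i j : ℕ} {f : (Fin (n+1) → F3) → ℝ} (hf : Mix (n+1) i j f)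
    (hj : j ≤ n+1) : Mix n i (min j n) (fun w => ∑ b : F3, sl (trS f) b w) := by
  obtain ⟨u, hu, hus⟩ := hf
  have heq : (fun w => ∑ b : F3, sl (trS f) b w)
      = fun w => ∑ k ∈ Finset.Icc i j, (fun w' => ∑ b : F3, sl (trS (u k)) b w') w := by
    funext w
    have h1 : ∀ b : F3, sl (trS f) b w = ∑ k ∈ Finset.Icc i j, sl (trS (u k)) b w :=
      fun b => sl_trS_sum hus b w
    simp only [h1]
    rw [Finset.sum_comm]
  rw [heq]
  apply Mix_funsum
  intro k hk
  have hk' := Finset.mem_Icc.mp hk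
  exact Mix_mono (pure_gsum (hu k hk)) (by omega) (by omega)


/-! ### Arithmetic helper -/

lemma h23 {p q p' q' : ℕ} (h1 : q ≤ q') (h2 : p + q ≤ p' + q') : 2^p * 3^q ≤ 2^p' * 3^q' := by
  calc 2^p*3^q ≤ 2^(p'+(q'-q))*3^q := by
        apply Nat.mul_le_mul_right
        apply Nat.pow_le_pow_right (by norm_num)
        omega
    _ = 2^p' * (2^(q'-q) * 3^q) := by rw [pow_add]; ring
    _ ≤ 2^p' * (3^(q'-q) * 3^q) := by
        apply Nat.mul_le_mul_left
        apply Nat.mul_le_mul_right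
        exact Nat.pow_le_pow_left (by norm_num) _
    _ = 2^p' * 3^q' := by
        rw [← pow_add]
        have e : q' - q + q = q' := by omega
        rw [e]

lemma suppc_of_zero {n : ℕ} {g : (Fin n → F3) → ℝ} (h : g = 0) : suppc g = 0 := by
  unfold suppc
  rw [Finset.card_eq_zero]
  apply Finset.filter_false_of_mem
  intro x _
  rw [h]
  simp

/-! ### The three cases of the induction step -/

section MainCases

variable {n i j : ℕ} {f : (Fin (n+1) → F3) → ℝ}

private lemma hsupp_slices (f : (Fin (n+1) → F3) → ℝ) :
    suppc f = ∑ a : F3, suppc (sl (trS f) a) := by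
  rw [← trS_suppc f, suppc_slices]

private lemma caseA
    (IH : ∀ i' j' (g : (Fin n → F3) → ℝ), i' ≤ j' → j' ≤ n → Mix n i' j' g → g ≠ 0 →
      2^(i'+j') * 3^(n-j') ≤ suppc g * 2^n)
    (hij : i ≤ j) (hjn : j ≤ n+1) (hj1 : 1 ≤ j) (hM : Mix (n+1) i j f)
    (hall : ∀ a : F3, sl (trS f) a ≠ 0) :
    2^(i+j) * 3^(n+1-j) ≤ suppc f * 2^(n+1) := by
  have hB : ∀ a : F3, 2^((i-1) + min j n) * 3^(n - min j n) ≤ suppc (sl (trS f) a) * 2^n := by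
    intro a
    exact IH _ _ _ (by omega) (by omega) (mix_slice hM hjn a) (hall a)
  have hsum := hsupp_slices f
  rw [Fin.sum_univ_three] at hsum
  set x0 := suppc (sl (trS f) 0)
  set x1 := suppc (sl (trS f) 1)
  set x2 := suppc (sl (trS f) 2)
  set B := 2^((i-1) + min j n) * 3^(n - min j n) with hBdef
  calc 2^(i+j) * 3^(n+1-j) ≤ 2^((i-1) + min j n + 1) * 3^(n - min j n + 1) :=
        h23 (by omega) (by omega)
    _ = 2*(B + B + B) := by rw [hBdef, pow_succ, pow_succ]; ring
    _ ≤ 2*((x0*2^n) + (x1*2^n) + (x2*2^n)) := by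
        apply Nat.mul_le_mul_left
        exact add_le_add (add_le_add (hB 0) (hB 1)) (hB 2)
    _ = (x0 + x1 + x2) * 2^(n+1) := by rw [pow_succ]; ring
    _ = suppc f * 2^(n+1) := by rw [hsum]

private lemma caseB
    (IH : ∀ i' j' (g : (Fin n → F3) → ℝ), i' ≤ j' → j' ≤ n → Mix n i' j' g → g ≠ 0 →
      2^(i'+j') * 3^(n-j') ≤ suppc g * 2^n)
    (hij : i ≤ j) (hjn : j ≤ n+1) (hj1 : 1 ≤ j) (hM : Mix (n+1) i j f)
    (a b c : F3) (hab : a ≠ b) (hca : c ≠ a) (hcb : c ≠ b)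
    (ha : sl (trS f) a ≠ 0) (hb : sl (trS f) b ≠ 0) (hc : sl (trS f) c = 0) :
    2^(i+j) * 3^(n+1-j) ≤ suppc f * 2^(n+1) := by
  have hMa : Mix n (i-1) (j-1) (sl (trS f) a) := by
    have h := mix_diff hM a c
    apply Mix_of_eq h
    funext w
    rw [congrFun hc w]
    show sl (trS f) a w - 0 = sl (trS f) a w
    ring
  have hMb : Mix n (i-1) (j-1) (sl (trS f) b) := by
    have h := mix_diff hM b c
    apply Mix_of_eq h
    funext w
    rw [congrFun hc w]
    show sl (trS f) b w - 0 = sl (trS f) b w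
    ring
  have hDa := IH _ _ _ (by omega) (by omega) hMa ha
  have hDb := IH _ _ _ (by omega) (by omega) hMb hb
  have hsum := hsupp_slices f
  have hsub : suppc (sl (trS f) a) + suppc (sl (trS f) b) ≤ suppc f := by
    rw [hsum]
    have h1 : ∑ x ∈ ({a, b} : Finset F3), suppc (sl (trS f) x)
        ≤ ∑ x : F3, suppc (sl (trS f) x) :=
      Finset.sum_le_sum_of_subset (Finset.subset_univ _)
    rw [Finset.sum_pair hab] at h1
    exact h1
  set xa := suppc (sl (trS f) a)
  set xb := suppc (sl (trS f) b)
  set D := 2^((i-1) + (j-1)) * 3^(n - (j-1)) with hDdef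
  calc 2^(i+j) * 3^(n+1-j) ≤ 2^((i-1) + (j-1) + 2) * 3^(n - (j-1)) :=
        h23 (by omega) (by omega)
    _ = 2*(D + D) := by rw [hDdef]; ring
    _ ≤ 2*((xa*2^n) + (xb*2^n)) := by
        apply Nat.mul_le_mul_left
        exact add_le_add hDa hDb
    _ = (xa + xb) * 2^(n+1) := by rw [pow_succ]; ring
    _ ≤ suppc f * 2^(n+1) := Nat.mul_le_mul_right _ hsub

private lemma caseC
    (IH : ∀ i' j' (g : (Fin n → F3) → ℝ), i' ≤ j' → j' ≤ n → Mix n i' j' g → g ≠ 0 →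
      2^(i'+j') * 3^(n-j') ≤ suppc g * 2^n)
    (hij : i ≤ j) (hjn : j ≤ n+1) (hj1 : 1 ≤ j) (hM : Mix (n+1) i j f)
    (a : F3) (ha : sl (trS f) a ≠ 0) (hothers : ∀ b, b ≠ a → sl (trS f) b = 0) :
    2^(i+j) * 3^(n+1-j) ≤ suppc f * 2^(n+1) := by
  -- pick b ≠ a
  obtain ⟨b, hba⟩ : ∃ b : F3, b ≠ a := by
    by_cases h : a = 0
    · exact ⟨1, by rw [h]; decide⟩
    · exact ⟨0, fun hc => h hc.symm⟩
  have hMa1 : Mix n (i-1) (j-1) (sl (trS f) a) := by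
    have h := mix_diff hM a b
    apply Mix_of_eq h
    funext w
    rw [congrFun (hothers b hba) w]
    show sl (trS f) a w - 0 = sl (trS f) a w
    ring
  have hMa2 : Mix n i (min j n) (sl (trS f) a) := by
    have h := mix_gsum hM hjn
    apply Mix_of_eq h
    funext w
    exact Finset.sum_eq_single a
      (fun b' _ hne => by rw [congrFun (hothers b' hne) w]; rfl)
      (fun h' => absurd (Finset.mem_univ a) h')
  have hMint := Mix_inter hMa2 hMa1
  have e1 : max i (i-1) = i := by omega
  have e2 : min (min j n) (j-1) = j-1 := by omega
  rw [e1, e2] at hMint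
  by_cases hile : i ≤ j-1
  · have hDa := IH _ _ _ hile (by omega) hMint ha
    have hsum := hsupp_slices f
    have hsub : suppc (sl (trS f) a) ≤ suppc f := by
      rw [hsum]
      have h1 : ∑ x ∈ ({a} : Finset F3), suppc (sl (trS f) x)
          ≤ ∑ x : F3, suppc (sl (trS f) x) :=
        Finset.sum_le_sum_of_subset (Finset.subset_univ _)
      rw [Finset.sum_singleton] at h1
      exact h1
    calc 2^(i+j) * 3^(n+1-j) ≤ 2^(i + (j-1) + 1) * 3^(n - (j-1)) :=
          h23 (by omega) (by omega)
      _ = 2^(i + (j-1)) * 3^(n - (j-1)) * 2 := by ring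
      _ ≤ suppc (sl (trS f) a) * 2^n * 2 := Nat.mul_le_mul_right _ hDa
      _ = suppc (sl (trS f) a) * 2^(n+1) := by rw [pow_succ]; ring
      _ ≤ suppc f * 2^(n+1) := Nat.mul_le_mul_right _ hsub
  · exfalso
    apply ha
    funext w
    exact Mix_empty hMint (by omega) w

end MainCases

/-! ### The main lower bound -/

lemma main_lb : ∀ (n i j : ℕ) (f : (Fin n → F3) → ℝ), i ≤ j → j ≤ n → Mix n i j f →
    f ≠ 0 → 2^(i+j) * 3^(n-j) ≤ suppc f * 2^n := by
  intro n
  induction n with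
  | zero =>
    intro i j f hij hjn hM hf0
    have hj : j = 0 := Nat.le_zero.mp hjn
    have hi : i = 0 := Nat.le_zero.mp (hj ▸ hij)
    subst hj; subst hi
    have hx : ∃ x, f x ≠ 0 := by
      by_contra h
      push_neg at h
      exact hf0 (funext h)
    obtain ⟨x, hx⟩ := hx
    have hpos : 0 < suppc f :=
      Finset.card_pos.mpr ⟨x, Finset.mem_filter.mpr ⟨Finset.mem_univ x, hx⟩⟩
    simp
    exact hpos
  | succ n IH =>
    intro i j f hij hjn hM hf0
    by_cases hj0 : j = 0
    · -- top eigenvalue : constants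
      subst hj0
      have hi0 : i = 0 := Nat.le_zero.mp hij
      subst hi0
      obtain ⟨u, hu, hus⟩ := hM
      have hfu : f = u 0 := by
        rw [hus, Finset.Icc_self, Finset.sum_singleton]
      have hfE : Eig (2*(((n+1):ℕ):ℝ)) f := by
        have h := hu 0 (Finset.mem_Icc.mpr ⟨le_rfl, le_rfl⟩)
        rw [← hfu] at h
        have e : lamE (n+1) 0 = 2*(((n+1):ℕ):ℝ) := by unfold lamE; push_cast; ring
        rw [e] at h
        exact h
      obtain ⟨c, hc⟩ := eig_top (n+1) f hfE
      have hc0 : c ≠ 0 := by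
        intro h
        apply hf0
        funext x
        rw [hc x, h]
        rfl
      have hsuppf : suppc f = 3^(n+1) := by
        unfold suppc
        have hfull : univ.filter (fun x : Fin (n+1) → F3 => f x ≠ 0) = univ := by
          apply Finset.filter_true_of_mem
          intro x _
          rw [hc x]
          exact hc0
        rw [hfull, Finset.card_univ]
        simp [Fintype.card_fun]
      rw [hsuppf]
      have : (3:ℕ)^(n+1) ≤ 3^(n+1) * 2^(n+1) :=
        Nat.le_mul_of_pos_right _ (by positivity)
      simpa using this
    · have hj1 : 1 ≤ j := Nat.one_le_iff_ne_zero.mpr hj0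
      by_cases h0 : sl (trS f) 0 = 0 <;>
      by_cases h1 : sl (trS f) 1 = 0 <;>
      by_cases h2 : sl (trS f) 2 = 0
      · -- all slices zero: f = 0
        exfalso
        apply hf0
        funext x
        apply zero_of_slices
        intro a w
        fin_cases a
        · exact congrFun h0 w
        · exact congrFun h1 w
        · exact congrFun h2 w
      · -- only slice 2 nonzero
        refine caseC IH hij hjn hj1 hM 2 h2 ?_
        intro b hb
        fin_cases b
        · exact h0
        · exact h1
        · exact absurd rfl hb
      · -- only slice 1 nonzero
        refine caseC IH hij hjn hj1 hM 1 h1 ?_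
        intro b hb
        fin_cases b
        · exact h0
        · exact absurd rfl hb
        · exact h2
      · -- slices 1,2 nonzero, 0 zero
        exact caseB IH hij hjn hj1 hM 1 2 0 (by decide) (by decide) (by decide) h1 h2 h0
      · -- only slice 0 nonzero
        refine caseC IH hij hjn hj1 hM 0 h0 ?_
        intro b hb
        fin_cases b
        · exact absurd rfl hb
        · exact h1
        · exact h2
      · -- slices 0,2 nonzero
        exact caseB IH hij hjn hj1 hM 0 2 1 (by decide) (by decide) (by decide) h0 h2 h1
      · -- slices 0,1 nonzero
        exact caseB IH hij hjn hj1 hM 0 1 2 (by decide) (by decide) (by decide) h0 h1 h2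
      · -- all nonzero
        refine caseA IH hij hjn hj1 hM ?_
        intro a
        fin_cases a
        · exact h0
        · exact h1
        · exact h2


/-! ### Support facts -/

lemma suppc_pos_of_ne {f : (ι → F3) → ℝ} (hf : f ≠ 0) : 0 < suppc f := by
  have hx : ∃ x, f x ≠ 0 := by
    by_contra h
    push_neg at h
    exact hf (funext h)
  obtain ⟨x, hx⟩ := hx
  exact Finset.card_pos.mpr ⟨x, Finset.mem_filter.mpr ⟨Finset.mem_univ x, hx⟩⟩

lemma ne_zero_of_suppc_pos {f : (ι → F3) → ℝ} (h : 0 < suppc f) : f ≠ 0 := by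
  intro h0
  have : suppc f = 0 := by
    unfold suppc
    rw [Finset.card_eq_zero]
    apply Finset.filter_false_of_mem
    intro x _
    rw [h0]
    simp
  omega

/-! ### Tensor products -/

def tens (B : (ι → F3) → ℝ) (C : (κ → F3) → ℝ) : (ι ⊕ κ → F3) → ℝ :=
  fun z => B (z ∘ Sum.inl) * C (z ∘ Sum.inr)

lemma Eig_tens {μ ν : ℝ} {B : (ι → F3) → ℝ} {C : (κ → F3) → ℝ}
    (hB : Eig μ B) (hC : Eig ν C) : Eig (μ + ν) (tens B C) := by
  intro z
  rw [nbrSum_split]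
  have e1 : ∑ u ∈ univ.filter (fun u => hammingDist (z ∘ Sum.inl) u = 1),
      tens B C (Sum.elim u (z ∘ Sum.inr)) = nbrSum B (z ∘ Sum.inl) * C (z ∘ Sum.inr) := by
    rw [nbrSum, Finset.sum_mul]
    exact Finset.sum_congr rfl (fun u _ => rfl)
  have e2 : ∑ v ∈ univ.filter (fun v => hammingDist (z ∘ Sum.inr) v = 1),
      tens B C (Sum.elim (z ∘ Sum.inl) v) = B (z ∘ Sum.inl) * nbrSum C (z ∘ Sum.inr) := by
    rw [nbrSum, Finset.mul_sum]
    exact Finset.sum_congr rfl (fun v _ => rfl)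
  rw [e1, e2, ← hB (z ∘ Sum.inl), ← hC (z ∘ Sum.inr)]
  show (μ + ν) * (B (z ∘ Sum.inl) * C (z ∘ Sum.inr)) = _
  ring

lemma suppc_tens (B : (ι → F3) → ℝ) (C : (κ → F3) → ℝ) :
    suppc (tens B C) = suppc B * suppc C := by
  unfold suppc
  rw [card_filter, card_filter, card_filter]
  rw [← Equiv.sum_comp (Equiv.sumArrowEquivProdArrow ι κ F3).symm
      (fun z => if tens B C z ≠ 0 then 1 else 0)]
  have hval : ∀ p : (ι → F3) × (κ → F3),
      tens B C ((Equiv.sumArrowEquivProdArrow ι κ F3).symm p) = B p.1 * C p.2 := fun p => rfl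
  simp only [hval]
  rw [Fintype.sum_prod_type]
  have hsplit : ∀ (u : ι → F3) (v : κ → F3),
      (if B u * C v ≠ 0 then (1:ℕ) else 0)
        = (if B u ≠ 0 then 1 else 0) * (if C v ≠ 0 then 1 else 0) := by
    intro u v
    by_cases hBu : B u = 0 <;> by_cases hCv : C v = 0 <;> simp [hBu, hCv]
  simp only [hsplit]
  rw [← Finset.sum_mul_sum]

lemma tens_ne_zero {B : (ι → F3) → ℝ} {C : (κ → F3) → ℝ} (hB : B ≠ 0) (hC : C ≠ 0) :
    tens B C ≠ 0 := by
  apply ne_zero_of_suppc_pos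
  rw [suppc_tens]
  exact Nat.mul_pos (suppc_pos_of_ne hB) (suppc_pos_of_ne hC)

/-! ### Integer-valued building blocks -/

lemma Eig_intCast {m : ℕ} {W : (Fin m → F3) → ℤ} {L : ℤ}
    (h : ∀ x, L * W x = ∑ y ∈ univ.filter (fun y => hammingDist x y = 1), W y) :
    Eig (L : ℝ) (fun x => (W x : ℝ)) := by
  intro x
  rw [nbrSum]
  show (L:ℝ) * ((W x : ℤ) : ℝ) = ∑ y ∈ univ.filter (fun y => hammingDist x y = 1), ((W y : ℤ) : ℝ)
  rw [← Int.cast_sum, ← Int.cast_mul, h x]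

lemma suppc_intCast {m : ℕ} (W : (Fin m → F3) → ℤ) :
    suppc (fun x => (W x : ℝ)) = (univ.filter (fun x => W x ≠ 0)).card := by
  unfold suppc
  apply congrArg Finset.card
  ext x
  simp [Int.cast_eq_zero]

def phiZ : (Fin 1 → F3) → ℤ := fun x => (![1, -1, 0] : Fin 3 → ℤ) (x 0)

def phiR : (Fin 1 → F3) → ℝ := fun x => (phiZ x : ℝ)

lemma phi_eig : Eig (lamE 1 1) phiR := by
  have h : ∀ x : Fin 1 → F3,
      (-1 : ℤ) * phiZ x = ∑ y ∈ univ.filter (fun y => hammingDist x y = 1), phiZ y := by decide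
  have h2 := Eig_intCast h
  have e : ((-1 : ℤ) : ℝ) = lamE 1 1 := by unfold lamE; push_cast; ring
  rw [e] at h2
  exact h2

lemma phi_supp : suppc phiR = 2 := by
  rw [show phiR = fun x => ((phiZ x : ℝ)) from rfl, suppc_intCast]
  decide

lemma phi_ne : phiR ≠ 0 := by
  intro h
  have := congrFun h (fun _ => 0)
  have hv : phiR (fun _ => 0) = 1 := by
    show ((![1, -1, 0] : Fin 3 → ℤ) 0 : ℝ) = 1
    norm_num
  rw [hv] at this
  simpa using this

def TZ : (Fin 3 → F3) → ℤ :=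
  fun x => (![![![-1,0,0],![0,1,0],![0,0,0]],
             ![![0,0,1],![0,0,0],![0,-1,0]],
             ![![0,0,0],![0,0,-1],![1,0,0]]] : Fin 3 → Fin 3 → Fin 3 → ℤ) (x 0) (x 1) (x 2)

def TR : (Fin 3 → F3) → ℝ := fun x => (TZ x : ℝ)

set_option maxRecDepth 10000 in
lemma T_eig : Eig (lamE 3 2) TR := by
  have h : ∀ x : Fin 3 → F3,
      (0 : ℤ) * TZ x = ∑ y ∈ univ.filter (fun y => hammingDist x y = 1), TZ y := by decide
  have h2 := Eig_intCast h
  have e : ((0 : ℤ) : ℝ) = lamE 3 2 := by unfold lamE; push_cast; ring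
  rw [e] at h2
  exact h2

set_option maxRecDepth 10000 in
lemma T_supp : suppc TR = 6 := by
  rw [show TR = fun x => ((TZ x : ℝ)) from rfl, suppc_intCast]
  decide

lemma T_ne : TR ≠ 0 := by
  intro h
  have := congrFun h (fun _ => 0)
  have hv : TR (fun _ => 0) = -1 := by
    show ((-1 : ℤ) : ℝ) = -1
    norm_num
  rw [hv] at this
  simp at this

/-! ### Existence of extremal eigenfunctions -/

lemma exists_extremal : ∀ (n : ℕ), ∀ (i : ℕ), 2*n < 3*i → i ≤ n →
    ∃ f : (Fin n → F3) → ℝ, Eig (lamE n i) f ∧ f ≠ 0 ∧ suppc f = 2^(2*i-n) * 3^(n-i) := by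
  intro n
  induction n using Nat.strong_induction_on with
  | h n IH =>
    intro i h1 h2
    by_cases hin : i = n
    · subst hin
      cases i with
      | zero => omega
      | succ m =>
        by_cases hm : m = 0
        · subst hm
          refine ⟨phiR, phi_eig, phi_ne, ?_⟩
          rw [phi_supp]
          norm_num
        · obtain ⟨g, hgE, hg0, hgs⟩ := IH m (by omega) m (by omega) le_rfl
          refine ⟨tr finSumFinEquiv (tens g phiR), ?_, tr_ne_zero _ (tens_ne_zero hg0 phi_ne), ?_⟩
          · have hE := Eig_tr finSumFinEquiv (Eig_tens hgE phi_eig)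
            have e : lamE m m + lamE 1 1 = lamE (m+1) (m+1) := by
              unfold lamE; push_cast; ring
            rw [e] at hE
            exact hE
          · rw [suppc_tr, suppc_tens, hgs, phi_supp]
            have e1 : 2*m - m + 1 = 2*(m+1) - (m+1) := by omega
            have e2 : m - m = (m+1) - (m+1) := by omega
            rw [← e1, ← e2, pow_succ]
            ring
    · -- i < n, so n ≥ 4 and we can peel off a triple
      have h4 : 4 ≤ n := by omega
      obtain ⟨m, rfl⟩ : ∃ m, n = m + 3 := ⟨n - 3, by omega⟩
      obtain ⟨g, hgE, hg0, hgs⟩ := IH m (by omega) (i-2) (by omega) (by omega)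
      refine ⟨tr finSumFinEquiv (tens g TR), ?_, tr_ne_zero _ (tens_ne_zero hg0 T_ne), ?_⟩
      · have hE := Eig_tr finSumFinEquiv (Eig_tens hgE T_eig)
        have e : lamE m (i-2) + lamE 3 2 = lamE (m+3) i := by
          unfold lamE
          rw [Nat.cast_sub (by omega : 2 ≤ i)]
          push_cast
          ring
        rw [e] at hE
        exact hE
      · rw [suppc_tr, suppc_tens, hgs, T_supp]
        have e1 : 2*(i-2) - m + 1 = 2*i - (m+3) := by omega
        have e2 : m - (i-2) + 1 = (m+3) - i := by omega
        rw [← e1, ← e2, pow_succ, pow_succ]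
        ring

end S9

/-! ### Glue to the required statement -/

lemma inU_iff {n k : ℕ} {f : (Fin n → Fin 3) → ℝ} : inU n 3 k f ↔ S9.Eig (S9.lamE n k) f := by
  unfold inU S9.Eig S9.nbrSum S9.lamE
  have e : ((n : ℝ) * (((3:ℕ):ℝ) - 1) - ((3:ℕ):ℝ) * (k : ℝ)) = 2*(n:ℝ) - 3*(k:ℝ) := by
    push_cast; ring
  constructor
  · intro h x; rw [← e]; exact h x
  · intro h x; rw [e]; exact h x

lemma suppCard_eq {n : ℕ} (f : (Fin n → Fin 3) → ℝ) : suppCard n 3 f = S9.suppc f := rfl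

/-- For `2n/3 < i ≤ n`, every nonzero `f ∈ U_i(n,3)` has
`|Supp(f)| ≥ 2^{2i-n} · 3^{n-i}`, and the bound is sharp. -/
theorem stmt9 (n i : ℕ) (hn : 1 ≤ n) (hi1 : 2 * n < 3 * i) (hi2 : i ≤ n) :
    (∀ f : (Fin n → Fin 3) → ℝ, inU n 3 i f → f ≠ 0 →
      2 ^ (2 * i - n) * 3 ^ (n - i) ≤ suppCard n 3 f) ∧
    (∃ f : (Fin n → Fin 3) → ℝ, inU n 3 i f ∧ f ≠ 0 ∧
      suppCard n 3 f = 2 ^ (2 * i - n) * 3 ^ (n - i)) := by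
  constructor
  · intro f hU hf0
    have hE : S9.Eig (S9.lamE n i) f := inU_iff.mp hU
    have hM : S9.Mix n i i f := by
      refine ⟨fun _ => f, ?_, ?_⟩
      · intro k hk
        have hki : k = i := by
          have := Finset.mem_Icc.mp hk
          omega
        rw [hki]
        exact hE
      · rw [Finset.Icc_self, Finset.sum_singleton]
    have h := S9.main_lb n i i f le_rfl hi2 hM hf0
    have e : 2^(i+i) = 2^(2*i-n) * 2^n := by
      rw [← pow_add]
      congr 1
      omega
    rw [e] at h
    have h' : 2^(2*i-n) * 3^(n-i) * 2^n ≤ suppCard n 3 f * 2^n := by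
      calc 2^(2*i-n) * 3^(n-i) * 2^n = 2^(2*i-n) * 2^n * 3^(n-i) := by ring
        _ ≤ S9.suppc f * 2^n := h
        _ = suppCard n 3 f * 2^n := by rw [suppCard_eq]
    exact Nat.le_of_mul_le_mul_right h' (by positivity)
  · obtain ⟨f, hE, hne, hsupp⟩ := S9.exists_extremal n i hi1 hi2
    exact ⟨f, inU_iff.mpr hE, hne, by rw [suppCard_eq]; exact hsupp⟩
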